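/- (Graver basis property.) Let D = (V, A) be the directed graph of a finite simple graph, and let ℤ(D) be the cycle lattice: integer vectors z ∈ ℤ^A with z_{r(a)} = −z_a for all a and Σ_{w : v→w ∈ A} z_{v→w} = 0 for all v. The set {z(ω) : ω a cycle of D} is exactly the set of minimal elements of ℤ(D) \ {0} with respect to the conformal partial order ⊑: every cycle vector is a nonzero element of ℤ(D) having no nonzero element of ℤ(D) strictly conformally below it, and conversely every nonzero z ∈ ℤ(D) has some cycle vector z(ω) with z(ω) ⊑ z. -/

import Mathlib

open Finset

/-- The arcs of the directed graph `D = (V, A)` associated to a simple graph `G`. -/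
abbrev Arc {V : Type*} (G : SimpleGraph V) : Type _ := {p : V × V // G.Adj p.1 p.2}

/-- The reversed arc. -/
def arcRev {V : Type*} {G : SimpleGraph V} (a : Arc G) : Arc G :=
  ⟨(a.1.2, a.1.1), a.2.symm⟩

/-- The cycle vector of a closed path `ω`: `+1` on the arcs of `ω`, `-1` on their reversals,
`0` elsewhere. -/
def cycVec {V : Type*} [DecidableEq V] (G : SimpleGraph V) {m : ℕ}
    (ω : Fin (m + 1) → V) (a : Arc G) : ℤ :=
  if ∃ i, (ω i, ω (i + 1)) = (a : V × V) then 1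
  else if ∃ i, (ω (i + 1), ω i) = (a : V × V) then -1 else 0

set_option linter.unusedSectionVars false

open Fin.NatCast

section Aux
variable {V : Type*} [Fintype V] [DecidableEq V] {G : SimpleGraph V} [DecidableRel G.Adj]
variable {m : ℕ} {ω : Fin (m + 1) → V}

lemma fin_two_ne (hm : 2 ≤ m) : (2 : Fin (m + 1)) ≠ 0 := by
  intro h
  have h2 : ((2 : Fin (m+1)) : ℕ) = 2 % (m+1) := rfl
  have := congrArg Fin.val h
  rw [h2, Nat.mod_eq_of_lt (by omega)] at this
  simp at this

lemma succ_ne_pred (hm : 2 ≤ m) (i : Fin (m + 1)) : i + 1 ≠ i - 1 := by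
  intro h
  have : i + 2 = i := by
    have := congrArg (· + 1) h
    simpa [add_assoc, sub_add_cancel, one_add_one_eq_two] using this
  exact fin_two_ne hm (by rwa [add_eq_left] at this)

def arcOf (hadj : ∀ j, G.Adj (ω j) (ω (j + 1))) (i : Fin (m + 1)) : Arc G :=
  ⟨(ω i, ω (i + 1)), hadj i⟩

lemma clash (hinj : Function.Injective ω) (hm : 2 ≤ m) (i j : Fin (m + 1)) :
    (ω i, ω (i + 1)) ≠ (ω (j + 1), ω j) := by
  intro h
  rw [Prod.ext_iff] at h
  have h1 : i = j + 1 := hinj h.1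
  have h2 : i + 1 = j := hinj h.2
  have : j + 2 = j := by
    rw [show j + 2 = j + 1 + 1 by rw [add_assoc, one_add_one_eq_two], ← h1, h2]
  exact fin_two_ne hm (by rwa [add_eq_left] at this)

lemma cv_fwd (a : Arc G) (h : ∃ i, (ω i, ω (i + 1)) = (a : V × V)) :
    cycVec G ω a = 1 := by
  rw [cycVec, if_pos h]

lemma cv_bwd (hinj : Function.Injective ω) (hm : 2 ≤ m) (a : Arc G)
    (h : ∃ i, (ω (i + 1), ω i) = (a : V × V)) : cycVec G ω a = -1 := by
  rw [cycVec, if_neg, if_pos h]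
  rintro ⟨i, hi⟩
  obtain ⟨j, hj⟩ := h
  exact clash hinj hm i j (hi.trans hj.symm)

lemma cv_zero (a : Arc G) (h1 : ¬ ∃ i, (ω i, ω (i + 1)) = (a : V × V))
    (h2 : ¬ ∃ i, (ω (i + 1), ω i) = (a : V × V)) : cycVec G ω a = 0 := by
  rw [cycVec, if_neg h1, if_neg h2]

lemma cv_cases (hadj : ∀ j, G.Adj (ω j) (ω (j + 1))) (a : Arc G) :
    (∃ i, a = arcOf hadj i) ∨ (∃ i, a = arcRev (arcOf hadj i)) ∨ cycVec G ω a = 0 := by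
  by_cases h1 : ∃ i, (ω i, ω (i + 1)) = (a : V × V)
  · obtain ⟨i, hi⟩ := h1
    exact Or.inl ⟨i, Subtype.ext hi.symm⟩
  by_cases h2 : ∃ i, (ω (i + 1), ω i) = (a : V × V)
  · obtain ⟨i, hi⟩ := h2
    exact Or.inr (Or.inl ⟨i, Subtype.ext hi.symm⟩)
  exact Or.inr (Or.inr (cv_zero a h1 h2))

lemma cv_arcOf (hadj : ∀ j, G.Adj (ω j) (ω (j + 1))) (i : Fin (m + 1)) :
    cycVec G ω (arcOf hadj i) = 1 :=
  cv_fwd _ ⟨i, rfl⟩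

lemma cv_arcRev_arcOf (hadj : ∀ j, G.Adj (ω j) (ω (j + 1)))
    (hinj : Function.Injective ω) (hm : 2 ≤ m) (i : Fin (m + 1)) :
    cycVec G ω (arcRev (arcOf hadj i)) = -1 :=
  cv_bwd hinj hm _ ⟨i, rfl⟩


lemma sum_out (hadj : ∀ j, G.Adj (ω j) (ω (j + 1))) (hinj : Function.Injective ω)
    (hm : 2 ≤ m) (y : Arc G → ℤ)
    (hy : ∀ a, cycVec G ω a = 0 → y a = 0) (i : Fin (m + 1)) :
    (∑ a ∈ univ.filter (fun a : Arc G => (a : V × V).1 = ω i), y a)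
      = y (arcOf hadj i) + y (arcRev (arcOf hadj (i - 1))) := by
  classical
  set ap := arcOf hadj i with hap
  set am := arcRev (arcOf hadj (i - 1)) with ham
  have hamval : (am : V × V) = (ω i, ω (i - 1)) := by
    simp [ham, arcRev, arcOf, sub_add_cancel]
  have hne : ap ≠ am := by
    intro h
    have h2 := congrArg (fun a : Arc G => (a : V × V).2) h
    simp only [hap, arcOf, hamval] at h2
    exact succ_ne_pred hm i (hinj h2)
  have hsub : ({ap, am} : Finset (Arc G)) ⊆
      univ.filter (fun a : Arc G => (a : V × V).1 = ω i) := by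
    intro a ha
    simp only [Finset.mem_insert, Finset.mem_singleton] at ha
    rcases ha with rfl | rfl
    · simp [hap, arcOf]
    · simp [hamval]
  rw [← Finset.sum_subset hsub ?_, Finset.sum_pair hne]
  intro a ha hnotin
  simp only [Finset.mem_filter, Finset.mem_univ, true_and] at ha
  simp only [Finset.mem_insert, Finset.mem_singleton, not_or] at hnotin
  rcases cv_cases hadj a with ⟨j, rfl⟩ | ⟨j, rfl⟩ | h0
  · have hji : ω j = ω i := ha
    exact absurd (by rw [hinj hji]) hnotin.1
  · have hji : ω (j + 1) = ω i := ha
    have hj : j = i - 1 := eq_sub_of_add_eq (hinj hji)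
    exact absurd (by rw [hj]) hnotin.2
  · exact hy _ h0

lemma sum_out_zero (hadj : ∀ j, G.Adj (ω j) (ω (j + 1)))
    (y : Arc G → ℤ) (hy : ∀ a, cycVec G ω a = 0 → y a = 0)
    (v : V) (hv : ∀ i, ω i ≠ v) :
    (∑ a ∈ univ.filter (fun a : Arc G => (a : V × V).1 = v), y a) = 0 := by
  apply Finset.sum_eq_zero
  intro a ha
  simp only [Finset.mem_filter, Finset.mem_univ, true_and] at ha
  rcases cv_cases hadj a with ⟨j, rfl⟩ | ⟨j, rfl⟩ | h0
  · exact absurd ha (hv j)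
  · exact absurd ha (hv (j + 1))
  · exact hy _ h0

lemma cv_antisym (hadj : ∀ j, G.Adj (ω j) (ω (j + 1))) (hinj : Function.Injective ω)
    (hm : 2 ≤ m) (a : Arc G) : cycVec G ω (arcRev a) = - cycVec G ω a := by
  rcases cv_cases hadj a with ⟨i, rfl⟩ | ⟨i, rfl⟩ | h0
  · rw [cv_arcRev_arcOf hadj hinj hm, cv_arcOf hadj]
  · have hrr : arcRev (arcRev (arcOf hadj i)) = arcOf hadj i := Subtype.ext rfl
    rw [hrr, cv_arcOf hadj, cv_arcRev_arcOf hadj hinj hm]; ring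
  · have hra : ((arcRev a : Arc G) : V × V) = ((a : V × V).2, (a : V × V).1) := rfl
    rw [h0, neg_zero]
    apply cv_zero
    · rintro ⟨i, hi⟩
      rw [hra, Prod.ext_iff] at hi
      have h1 : cycVec G ω a = -1 := cv_bwd hinj hm a ⟨i, Prod.ext_iff.mpr ⟨hi.2, hi.1⟩⟩
      omega
    · rintro ⟨i, hi⟩
      rw [hra, Prod.ext_iff] at hi
      have h1 : cycVec G ω a = 1 := cv_fwd a ⟨i, Prod.ext_iff.mpr ⟨hi.2, hi.1⟩⟩
      omega

lemma cv_flow (hadj : ∀ j, G.Adj (ω j) (ω (j + 1))) (hinj : Function.Injective ω)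
    (hm : 2 ≤ m) (v : V) :
    (∑ a ∈ univ.filter (fun a : Arc G => (a : V × V).1 = v), cycVec G ω a) = 0 := by
  by_cases hv : ∃ i, ω i = v
  · obtain ⟨i, rfl⟩ := hv
    rw [sum_out hadj hinj hm _ (fun a h => h) i, cv_arcOf hadj,
      cv_arcRev_arcOf hadj hinj hm]
    ring
  · push_neg at hv
    exact sum_out_zero hadj _ (fun a h => h) v hv

lemma cv_ne_zero (hadj : ∀ j, G.Adj (ω j) (ω (j + 1))) : cycVec G ω ≠ 0 := by
  intro h
  have := congrFun h (arcOf hadj 0)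
  rw [cv_arcOf hadj] at this
  simpa using this

lemma cv_min (hadj : ∀ j, G.Adj (ω j) (ω (j + 1))) (hinj : Function.Injective ω)
    (hm : 2 ≤ m) (z : Arc G → ℤ) (hrev : ∀ a, z (arcRev a) = - z a)
    (hflow : ∀ v : V, (∑ a ∈ univ.filter (fun a : Arc G => (a : V × V).1 = v), z a) = 0)
    (hne : z ≠ 0)
    (hconf : ∀ a, 0 ≤ z a * cycVec G ω a ∧ |z a| ≤ |cycVec G ω a|) :
    z = cycVec G ω := by
  have hz0 : ∀ a, cycVec G ω a = 0 → z a = 0 := by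
    intro a h
    have h2 := (hconf a).2
    rw [h, abs_zero] at h2
    exact abs_nonpos_iff.mp h2
  have hstep : ∀ i : Fin (m + 1), z (arcOf hadj (i + 1)) = z (arcOf hadj i) := by
    intro i
    have h1 := sum_out hadj hinj hm z hz0 (i + 1)
    rw [hflow (ω (i + 1)), add_sub_cancel_right, hrev] at h1
    omega
  have hconst : ∀ i : Fin (m + 1), z (arcOf hadj i) = z (arcOf hadj 0) := by
    have key : ∀ n : ℕ, z (arcOf hadj (n : Fin (m + 1))) = z (arcOf hadj 0) := by
      intro n
      induction n with
      | zero => simp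
      | succ k ih =>
        rw [show ((k + 1 : ℕ) : Fin (m + 1)) = (k : Fin (m + 1)) + 1 from by push_cast; ring,
          hstep, ih]
    intro i
    have := key i.val
    rwa [Fin.cast_val_eq_self] at this
  have hzne : z (arcOf hadj 0) ≠ 0 := by
    obtain ⟨a, ha⟩ := Function.ne_iff.mp hne
    rcases cv_cases hadj a with ⟨j, rfl⟩ | ⟨j, rfl⟩ | h0
    · rw [← hconst j]; exact ha
    · intro h0'
      apply ha
      show z _ = 0
      rw [hrev, hconst j, h0', neg_zero]
    · exact absurd (hz0 _ h0) ha
  have hc1 : z (arcOf hadj 0) = 1 := by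
    have h1 := (hconf (arcOf hadj 0)).1
    have h2 := (hconf (arcOf hadj 0)).2
    rw [cv_arcOf hadj, mul_one] at h1
    rw [cv_arcOf hadj, abs_one] at h2
    have h3 := abs_le.mp h2
    omega
  funext a
  rcases cv_cases hadj a with ⟨j, rfl⟩ | ⟨j, rfl⟩ | h0
  · rw [cv_arcOf hadj, hconst j, hc1]
  · rw [cv_arcRev_arcOf hadj hinj hm, hrev, hconst j, hc1]
  · rw [h0, hz0 _ h0]

def chain {α : Type*} (g : α → α) (a₀ : α) : ℕ → α
  | 0 => a₀
  | n + 1 => g (chain g a₀ n)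

lemma exists_cycle (z : Arc G → ℤ) (hrev : ∀ a, z (arcRev a) = - z a)
    (hflow : ∀ v : V, (∑ a ∈ univ.filter (fun a : Arc G => (a : V × V).1 = v), z a) = 0)
    (hne : z ≠ 0) :
    ∃ (M : ℕ) (Ω : Fin (M + 1) → V),
      (∀ j, G.Adj (Ω j) (Ω (j + 1))) ∧ Function.Injective Ω ∧ 2 ≤ M ∧
      ∀ a, 0 ≤ cycVec G Ω a * z a ∧ |cycVec G Ω a| ≤ |z a| := by
  classical
  have hstep : ∀ a : Arc G, 0 < z a →
      ∃ b : Arc G, ((b : V × V).1 = (a : V × V).2 ∧ 0 < z b) := by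
    intro a ha
    by_contra hcon
    push_neg at hcon
    have hlt : (∑ b ∈ univ.filter (fun b : Arc G => (b : V × V).1 = (a : V × V).2), z b)
        < ∑ b ∈ univ.filter (fun b : Arc G => (b : V × V).1 = (a : V × V).2), (0 : ℤ) := by
      apply Finset.sum_lt_sum
      · intro b hb
        simp only [Finset.mem_filter, Finset.mem_univ, true_and] at hb
        exact hcon b hb
      · refine ⟨arcRev a, ?_, ?_⟩
        · simp [arcRev]
        · rw [hrev]; omega
    rw [hflow, Finset.sum_const_zero] at hlt
    exact lt_irrefl 0 hlt
  obtain ⟨a', ha'⟩ := Function.ne_iff.mp hne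
  have ha'' : z a' ≠ 0 := ha'
  have hstart : ∃ a : Arc G, 0 < z a := by
    rcases lt_or_gt_of_ne ha'' with h | h
    · exact ⟨arcRev a', by rw [hrev]; omega⟩
    · exact ⟨a', h⟩
  obtain ⟨a₀, ha₀⟩ := hstart
  have hstep' : ∀ a : {a : Arc G // 0 < z a}, ∃ b : {a : Arc G // 0 < z a},
      ((b : Arc G) : V × V).1 = ((a : Arc G) : V × V).2 := by
    intro a
    obtain ⟨b, hb1, hb2⟩ := hstep a.1 a.2
    exact ⟨⟨b, hb2⟩, hb1⟩
  choose g hg using hstep'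
  set f : ℕ → {a : Arc G // 0 < z a} := chain g ⟨a₀, ha₀⟩ with hfdef
  have hfsucc : ∀ n, f (n + 1) = g (f n) := fun n => rfl
  set w : ℕ → V := fun n => ((f n : Arc G) : V × V).1 with hwdef
  have hwval : ∀ n, ((f n : Arc G) : V × V) = (w n, w (n + 1)) := by
    intro n
    have h2 : w (n + 1) = ((f n : Arc G) : V × V).2 := by
      rw [hwdef]
      simp only [hfsucc n]
      exact hg (f n)
    exact Prod.ext_iff.mpr ⟨rfl, h2.symm⟩
  have hadjW : ∀ n, G.Adj (w n) (w (n + 1)) := by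
    intro n
    have h := ((f n : Arc G)).2
    rwa [hwval n] at h
  have hposW : ∀ n (h : G.Adj (w n) (w (n + 1))), 0 < z ⟨(w n, w (n + 1)), h⟩ := by
    intro n h
    have he : (⟨(w n, w (n + 1)), h⟩ : Arc G) = (f n : Arc G) := Subtype.ext (hwval n).symm
    rw [he]; exact (f n).2
  -- pigeonhole
  have hninj : ¬ Function.Injective (fun k : Fin (Fintype.card V + 1) => w k) := by
    intro hinj
    have := Fintype.card_le_of_injective _ hinj
    simp at this
  obtain ⟨k1, k2, hk12, hkne⟩ := Function.not_injective_iff.mp hninj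
  have hkv : (k1 : ℕ) ≠ (k2 : ℕ) := fun h => hkne (Fin.ext h)
  have hP : ∃ j, ∃ i, i < j ∧ w i = w j := by
    rcases hkv.lt_or_gt with h | h
    · exact ⟨k2, k1, h, hk12⟩
    · exact ⟨k1, k2, h, hk12.symm⟩
  set J := Nat.find hP with hJdef
  obtain ⟨i, hiJ, hwiJ⟩ := Nat.find_spec hP
  rw [← hJdef] at hiJ hwiJ
  have hmin : ∀ j, j < J → ¬ ∃ i, i < j ∧ w i = w j := fun j hj => Nat.find_min hP hj
  have hne1 : J ≠ i + 1 := by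
    intro h
    rw [h] at hwiJ
    exact (hadjW i).ne hwiJ
  have hne2 : J ≠ i + 2 := by
    intro h
    rw [h] at hwiJ
    have p1 : 0 < z ⟨(w i, w (i + 1)), hadjW i⟩ := hposW i _
    have p2 : 0 < z ⟨(w (i + 1), w (i + 2)), hadjW (i + 1)⟩ := hposW (i + 1) _
    have he : (⟨(w (i + 1), w (i + 2)), hadjW (i + 1)⟩ : Arc G)
        = arcRev ⟨(w i, w (i + 1)), hadjW i⟩ := by
      apply Subtype.ext
      simp [arcRev, ← hwiJ]
    rw [he, hrev] at p2
    omega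
  have hJi : i + 3 ≤ J := by omega
  set M := J - i - 1 with hMdef
  have hM2 : 2 ≤ M := by omega
  have hJeq : J = i + M + 1 := by omega
  set Ω : Fin (M + 1) → V := fun k => w (i + k.val) with hΩ
  have hwrap : ∀ k : Fin (M + 1), Ω (k + 1) = w (i + k.val + 1) := by
    intro k
    have h1 : 1 % (M + 1) = 1 := Nat.mod_eq_of_lt (by omega)
    have hv1 : ((k + 1 : Fin (M + 1)) : ℕ) = (k.val + 1) % (M + 1) := by
      simp [Fin.add_def, Fin.val_one', h1]
    rcases Nat.lt_or_ge (k.val + 1) (M + 1) with h | h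
    · show w (i + ((k + 1 : Fin (M + 1)) : ℕ)) = w (i + k.val + 1)
      rw [hv1, Nat.mod_eq_of_lt h, ← Nat.add_assoc]
    · have hk : k.val = M := by have := k.isLt; omega
      have hv0 : ((k + 1 : Fin (M + 1)) : ℕ) = 0 := by rw [hv1, hk, Nat.mod_self]
      show w (i + ((k + 1 : Fin (M + 1)) : ℕ)) = w (i + k.val + 1)
      rw [hv0, hk, Nat.add_zero, show i + M + 1 = J from hJeq.symm]
      exact hwiJ
  have hadjΩ : ∀ k : Fin (M + 1), G.Adj (Ω k) (Ω (k + 1)) := by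
    intro k
    rw [hwrap k]
    exact hadjW (i + k.val)
  have hposΩ : ∀ (k : Fin (M + 1)) (h : G.Adj (Ω k) (Ω (k + 1))),
      0 < z ⟨(Ω k, Ω (k + 1)), h⟩ := by
    intro k h
    have h' := h
    rw [hwrap k] at h'
    have he : (⟨(Ω k, Ω (k + 1)), h⟩ : Arc G)
        = ⟨(w (i + k.val), w (i + k.val + 1)), h'⟩ := by
      apply Subtype.ext
      show (Ω k, Ω (k + 1)) = (w (i + k.val), w (i + k.val + 1))
      rw [hwrap k]
    rw [he]
    exact hposW (i + k.val) h'
  have hinjΩ : Function.Injective Ω := by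
    have key : ∀ p q : Fin (M + 1), p.val < q.val → w (i + p.val) ≠ w (i + q.val) := by
      intro p q hpq heq
      have hq := q.isLt
      exact hmin (i + q.val) (by omega) ⟨i + p.val, by omega, heq⟩
    intro k k' h
    rcases Nat.lt_trichotomy k.val k'.val with hlt | heq | hgt
    · exact absurd h (key k k' hlt)
    · exact Fin.ext heq
    · exact absurd h.symm (key k' k hgt)
  refine ⟨M, Ω, hadjΩ, hinjΩ, hM2, ?_⟩
  intro a
  by_cases hf : ∃ k : Fin (M + 1), (Ω k, Ω (k + 1)) = (a : V × V)
  · have hcv : cycVec G Ω a = 1 := cv_fwd a hf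
    obtain ⟨k, hk⟩ := hf
    have hz : 0 < z a := by
      have he : a = ⟨(Ω k, Ω (k + 1)), hk ▸ a.2⟩ := Subtype.ext hk.symm
      rw [he]
      exact hposΩ k _
    rw [hcv]
    constructor
    · rw [one_mul]; omega
    · rw [abs_one]
      have := abs_of_pos hz
      omega
  · by_cases hb : ∃ k : Fin (M + 1), (Ω (k + 1), Ω k) = (a : V × V)
    · have hcv : cycVec G Ω a = -1 := by
        rw [cycVec, if_neg hf, if_pos hb]
      obtain ⟨k, hk⟩ := hb
      have hzr : 0 < z (arcRev a) := by
        have hval : ((arcRev a : Arc G) : V × V) = (Ω k, Ω (k + 1)) := by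
          have h1 : (a : V × V) = (Ω (k + 1), Ω k) := hk.symm
          rw [show ((arcRev a : Arc G) : V × V) = ((a : V × V).2, (a : V × V).1) from rfl, h1]
        have he : arcRev a = ⟨(Ω k, Ω (k + 1)), hval ▸ (arcRev a).2⟩ := Subtype.ext hval
        rw [he]
        exact hposΩ k _
      rw [hrev] at hzr
      rw [hcv]
      constructor
      · omega
      · rw [abs_neg, abs_one]
        have := abs_of_neg (show z a < 0 by omega)
        omega
    · have hcv : cycVec G Ω a = 0 := cv_zero a hf hb
      rw [hcv]
      simp [abs_nonneg]

end Aux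


/-- Graver basis property: the cycle vectors are exactly the minimal nonzero
elements of the cycle lattice `ℤ(D)` for the conformal order: every cycle vector is a nonzero
element of `ℤ(D)` with no nonzero element of `ℤ(D)` strictly conformally below it, and every
nonzero element of `ℤ(D)` has a cycle vector conformally below it. -/
theorem stmt_12 {V : Type*} [Fintype V] [DecidableEq V]
    (G : SimpleGraph V) [DecidableRel G.Adj] :
    (∀ (m : ℕ) (ω : Fin (m + 1) → V),
      (∀ j, G.Adj (ω j) (ω (j + 1))) → Function.Injective ω → 2 ≤ m →
      (∀ a : Arc G, cycVec G ω (arcRev a) = - cycVec G ω a) ∧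
      (∀ v : V, (∑ a ∈ univ.filter (fun a : Arc G => (a : V × V).1 = v),
          cycVec G ω a) = 0) ∧
      cycVec G ω ≠ 0 ∧
      (∀ z : Arc G → ℤ, (∀ a, z (arcRev a) = - z a) →
        (∀ v : V, (∑ a ∈ univ.filter (fun a : Arc G => (a : V × V).1 = v), z a) = 0) →
        z ≠ 0 → (∀ a, 0 ≤ z a * cycVec G ω a ∧ |z a| ≤ |cycVec G ω a|) →
        z = cycVec G ω)) ∧
    (∀ z : Arc G → ℤ, (∀ a, z (arcRev a) = - z a) →
      (∀ v : V, (∑ a ∈ univ.filter (fun a : Arc G => (a : V × V).1 = v), z a) = 0) →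
      z ≠ 0 →
      ∃ (m : ℕ) (ω : Fin (m + 1) → V),
        (∀ j, G.Adj (ω j) (ω (j + 1))) ∧ Function.Injective ω ∧ 2 ≤ m ∧
        ∀ a, 0 ≤ cycVec G ω a * z a ∧ |cycVec G ω a| ≤ |z a|) := by
  constructor
  · intro m ω hadj hinj hm
    exact ⟨cv_antisym hadj hinj hm, cv_flow hadj hinj hm, cv_ne_zero hadj,
      fun z hrev hflow hne hconf => cv_min hadj hinj hm z hrev hflow hne hconf⟩
  · intro z hrev hflow hne
    exact exists_cycle z hrev hflow hne
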